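/- Let N, R_r, K_c be positive integers with R_r ≥ K_c, let 𝒟 ⊆ {1,…,N} with N − R_r + K_c − |𝒟| ≥ 1, and let d : {1,…,N} → ℝ be nonnegative. If for every subset X ⊆ {1,…,N}∖𝒟 with |X| = R_r − K_c one has ∑_{n ∈ {1,…,N}∖X∖𝒟} d(n) ≥ 1, then ∑_{n ∈ {1,…,N}∖𝒟} d(n) ≥ (N − |𝒟|)/(N − R_r + K_c − |𝒟|). -/

import Mathlib

/-- Averaged download-cost lower bound `C_r ≥ (N - |𝒟|)/(N - R_r + K_c - |𝒟|)`
(Remark 1, case `S ≥ K_c`). -/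
theorem choose_aux (m t : ℕ) (h : t < m) :
    m * (m - 1).choose t = (m - t) * m.choose t := by
  obtain ⟨m', rfl⟩ : ∃ m', m = m' + 1 := ⟨m - 1, by omega⟩
  have htm' : t ≤ m' := by omega
  have h1 := Nat.add_one_mul_choose_eq m' (m' - t)
  have h2 : m'.choose (m' - t) = m'.choose t := by
    rw [Nat.choose_symm htm']
  have h3 : m' - t + 1 = m' + 1 - t := by omega
  simp -failIfUnchanged only [Nat.succ_eq_add_one] at h1
  rw [h2, h3] at h1
  have h4 : (m' + 1).choose (m' + 1 - t) = (m' + 1).choose t :=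
    Nat.choose_symm (by omega)
  rw [h4] at h1
  simpa [mul_comm] using h1

/-- main -/
theorem stmt_1 (N R_r K_c : ℕ) (hN : 0 < N) (hR : 0 < R_r) (hK : 0 < K_c)
    (hKR : K_c ≤ R_r)
    (𝒟 : Finset ℕ) (h𝒟 : 𝒟 ⊆ Finset.Icc 1 N)
    (hcard : 1 ≤ (N : ℤ) - (R_r : ℤ) + (K_c : ℤ) - (𝒟.card : ℤ))
    (d : ℕ → ℝ) (hd : ∀ n ∈ Finset.Icc 1 N, 0 ≤ d n)
    (h : ∀ X ⊆ Finset.Icc 1 N \ 𝒟, X.card = R_r - K_c →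
      1 ≤ ∑ n ∈ (Finset.Icc 1 N \ X) \ 𝒟, d n) :
    ((N : ℝ) - (𝒟.card : ℝ)) / ((N : ℝ) - (R_r : ℝ) + (K_c : ℝ) - (𝒟.card : ℝ)) ≤
      ∑ n ∈ Finset.Icc 1 N \ 𝒟, d n := by
  set A : Finset ℕ := Finset.Icc 1 N \ 𝒟 with hA
  set t : ℕ := R_r - K_c with ht
  set m : ℕ := A.card with hm
  have hDN : 𝒟.card ≤ N := by
    have := Finset.card_le_card h𝒟
    simpa using this
  have hmval : m = N - 𝒟.card := by
    rw [hm, hA, Finset.card_sdiff_of_subset h𝒟]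
    simp
  have htm : t < m := by
    have : (t : ℤ) = (R_r : ℤ) - K_c := by
      rw [ht]; push_cast [Nat.cast_sub hKR]; ring
    have hmz : (m : ℤ) = (N : ℤ) - 𝒟.card := by
      rw [hmval]; push_cast [Nat.cast_sub hDN]; ring
    omega
  have hm1 : 1 ≤ m := lt_of_le_of_lt (Nat.zero_le _) htm
  -- nonnegativity on A
  have hdA : ∀ n ∈ A, 0 ≤ d n := fun n hn => hd n (Finset.mem_sdiff.mp hn).1
  have hS0 : 0 ≤ ∑ n ∈ A, d n := Finset.sum_nonneg hdA
  -- key counting step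
  have hfilter : ∀ n ∈ A, (A.powersetCard t).filter (fun X => n ∉ X)
      = (A.erase n).powersetCard t := by
    intro n hn
    ext X
    simp only [Finset.mem_filter, Finset.mem_powersetCard, Finset.subset_erase]
    tauto
  have key : ((m.choose t : ℝ)) ≤ ((m - 1).choose t : ℝ) * ∑ n ∈ A, d n := by
    have step1 : ((m.choose t : ℝ)) ≤ ∑ X ∈ A.powersetCard t, ∑ n ∈ A \ X, d n := by
      have : ((m.choose t : ℝ)) = ∑ X ∈ A.powersetCard t, (1 : ℝ) := by
        simp [Finset.card_powersetCard, hm]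
      rw [this]
      refine Finset.sum_le_sum fun X hX => ?_
      rw [Finset.mem_powersetCard] at hX
      have hsub : X ⊆ Finset.Icc 1 N \ 𝒟 := hX.1
      have := h X hsub hX.2
      have heq : (Finset.Icc 1 N \ X) \ 𝒟 = A \ X := by
        rw [hA, sdiff_sdiff_comm]
      rwa [heq] at this
    have step2 : ∑ X ∈ A.powersetCard t, ∑ n ∈ A \ X, d n
        = ∑ n ∈ A, (((A.erase n).powersetCard t).card : ℝ) * d n := by
      have : ∀ X ∈ A.powersetCard t, ∑ n ∈ A \ X, d n
          = ∑ n ∈ A, if n ∉ X then d n else 0 := by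
        intro X hX
        rw [Finset.sdiff_eq_filter, Finset.sum_filter]
      rw [Finset.sum_congr rfl this, Finset.sum_comm]
      refine Finset.sum_congr rfl fun n hn => ?_
      rw [Finset.sum_ite, Finset.sum_const_zero, add_zero, Finset.sum_const,
        hfilter n hn, nsmul_eq_mul]
    have step3 : ∀ n ∈ A, (((A.erase n).powersetCard t).card : ℝ) = ((m - 1).choose t : ℝ) := by
      intro n hn
      rw [Finset.card_powersetCard, Finset.card_erase_of_mem hn, hm]
    calc ((m.choose t : ℝ)) ≤ ∑ X ∈ A.powersetCard t, ∑ n ∈ A \ X, d n := step1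
      _ = ∑ n ∈ A, (((A.erase n).powersetCard t).card : ℝ) * d n := step2
      _ = ∑ n ∈ A, ((m - 1).choose t : ℝ) * d n := by
          refine Finset.sum_congr rfl fun n hn => ?_
          rw [step3 n hn]
      _ = ((m - 1).choose t : ℝ) * ∑ n ∈ A, d n := by rw [Finset.mul_sum]
  have hid : m * (m - 1).choose t = (m - t) * m.choose t := choose_aux m t htm
  have hpos : 0 < (m - 1).choose t := Nat.choose_pos (by omega)
  -- derive m ≤ (m - t) * S
  have hmain : (m : ℝ) ≤ ((m : ℝ) - t) * ∑ n ∈ A, d n := by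
    have hmt : ((m - t : ℕ) : ℝ) = (m : ℝ) - t := by
      push_cast [Nat.cast_sub htm.le]; ring
    have hcp : (0 : ℝ) < ((m - 1).choose t : ℝ) := by exact_mod_cast hpos
    have h2 : (m : ℝ) * ((m - 1).choose t : ℝ) = ((m - t : ℕ) : ℝ) * (m.choose t : ℝ) := by
      exact_mod_cast congrArg (Nat.cast : ℕ → ℝ) hid
    nlinarith [key, hcp, hmt, h2]
  -- translate to the stated form
  have hNcast : (N : ℝ) - 𝒟.card = (m : ℝ) := by
    rw [hmval]; push_cast [Nat.cast_sub hDN]; ring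
  have hden : (N : ℝ) - R_r + K_c - 𝒟.card = (m : ℝ) - t := by
    rw [hmval, ht]; push_cast [Nat.cast_sub hDN, Nat.cast_sub hKR]; ring
  rw [hNcast, hden, div_le_iff₀ (by
    have : (t : ℝ) < m := by exact_mod_cast htm
    linarith)]
  linarith [hmain]
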